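/- Let G be a unit interval graph with a unit interval vertex order < (i.e., a linear order of V(G) in which the closed neighborhood of each vertex is an interval). If u < v and u = y₁, y₂, …, y_r = v is a shortest path from u to v, then y_i < y_{i+1} for every 1 ≤ i ≤ r−1. -/

import Mathlib

open SimpleGraph

variable {V : Type*}

/-- The `P₃`-interval operator: add every vertex with at least two neighbors in `S`. -/
def pInterval (G : SimpleGraph V) (S : Set V) : Set V :=
  S ∪ {v | ∃ u w, u ≠ w ∧ u ∈ S ∧ w ∈ S ∧ G.Adj u v ∧ G.Adj w v}

/-- `pIter G S k = I^k[S]`. -/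
def pIter (G : SimpleGraph V) (S : Set V) : ℕ → Set V
  | 0 => S
  | k + 1 => pInterval G (pIter G S k)

/-- `S` is a `P₃`-hull set of `G` (it percolates `G`). -/
def Percolates (G : SimpleGraph V) (S : Set V) : Prop :=
  ∃ k, pIter G S k = Set.univ

/-- Percolation time of a hull set `S`. -/
noncomputable def percTime (G : SimpleGraph V) (S : Set V) : ℕ :=
  sInf {k | pIter G S k = Set.univ}

/-- The least `k` such that `x ∈ I^k[S]`. -/
noncomputable def percTimeAt (G : SimpleGraph V) (S : Set V) (x : V) : ℕ :=
  sInf {k | x ∈ pIter G S k}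

/-- The percolation time of `G`: the maximum percolation time over all hull sets. -/
noncomputable def percolationTime (G : SimpleGraph V) : ℕ :=
  sSup {t | ∃ S : Set V, Percolates G S ∧ percTime G S = t}

/-- A `P₃`-geodetic set: every vertex outside `S` has at least two neighbors in `S`. -/
def IsGeodetic (G : SimpleGraph V) (S : Set V) : Prop :=
  ∀ v, v ∉ S → ∃ u w, u ≠ w ∧ u ∈ S ∧ w ∈ S ∧ G.Adj u v ∧ G.Adj w v

/-- The `P₃`-geodetic number of `G`. -/
noncomputable def geodeticNumber (G : SimpleGraph V) : ℕ :=
  sInf {n | ∃ S : Set V, IsGeodetic G S ∧ S.ncard = n}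

/-- The `P₃`-hull number of `G`. -/
noncomputable def hullNumber (G : SimpleGraph V) : ℕ :=
  sInf {n | ∃ S : Set V, Percolates G S ∧ S.ncard = n}

/-- A linear order on the vertices of `G` is a unit interval order if every closed
neighborhood is an interval of consecutive vertices. -/
def IsUnitIntervalOrder (G : SimpleGraph V) [LinearOrder V] : Prop :=
  ∀ v x y z : V, (x = v ∨ G.Adj v x) → (z = v ∨ G.Adj v z) → x ≤ y → y ≤ z →
    (y = v ∨ G.Adj v y)


private lemma step_lemma {V : Type*} [LinearOrder V] {G : SimpleGraph V}
    (hG : ∀ v x y z : V, (x = v ∨ G.Adj v x) → (z = v ∨ G.Adj v z) → x ≤ y → y ≤ z →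
      (y = v ∨ G.Adj v y))
    {a b c : V} (hab : G.Adj a b) (hbc : G.Adj b c)
    (hac : a ≠ c) (hnadj : ¬ G.Adj a c) :
    (a < b → b < c) ∧ (b < a → c < b) := by
  constructor
  · intro h1
    rcases lt_trichotomy b c with h2 | h2 | h2
    · exact h2
    · exact absurd h2 hbc.ne
    · rcases lt_trichotomy a c with h3 | h3 | h3
      · rcases hG a a c b (Or.inl rfl) (Or.inr hab) h3.le h2.le with h4 | h4
        · exact absurd h4.symm hac
        · exact absurd h4 hnadj
      · exact absurd h3 hac
      · rcases hG c c a b (Or.inl rfl) (Or.inr hbc.symm) h3.le h1.le with h4 | h4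
        · exact absurd h4 hac
        · exact absurd h4.symm hnadj
  · intro h1
    rcases lt_trichotomy c b with h2 | h2 | h2
    · exact h2
    · exact absurd h2.symm hbc.ne
    · rcases lt_trichotomy a c with h3 | h3 | h3
      · rcases hG c b a c (Or.inr hbc.symm) (Or.inl rfl) h1.le h3.le with h4 | h4
        · exact absurd h4 hac
        · exact absurd h4.symm hnadj
      · exact absurd h3 hac
      · rcases hG a b c a (Or.inr hab) (Or.inl rfl) h2.le h3.le with h4 | h4
        · exact absurd h4.symm hac
        · exact absurd h4 hnadj

private lemma aux_mono {V : Type*} [LinearOrder V] {G : SimpleGraph V}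
    (hG : ∀ v x y z : V, (x = v ∨ G.Adj v x) → (z = v ∨ G.Adj v z) → x ≤ y → y ≤ z →
      (y = v ∨ G.Adj v y)) :
    ∀ {u v : V} (p : G.Walk u v), p.IsPath → p.length = G.dist u v → u ≠ v →
      (u < v ∧ p.support.Chain' (· < ·)) ∨ (v < u ∧ p.support.Chain' (· > ·)) := by
  intro u v p
  induction p with
  | nil => intro _ _ h; exact absurd rfl h
  | @cons u w v h q ih =>
    intro hp hlen hne
    have hq : q.IsPath := hp.of_cons
    simp only [Walk.length_cons] at hlen
    have hql : q.length = G.dist w v := by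
      have h1 : G.dist w v ≤ q.length := SimpleGraph.dist_le q
      have h2 : G.dist u v ≤ G.dist w v + 1 := by
        obtain ⟨q', hq'⟩ := q.reachable.exists_walk_length_eq_dist
        have := SimpleGraph.dist_le (Walk.cons h q')
        simp [hq'] at this
        omega
      omega
    cases q with
    | nil =>
      rcases lt_or_gt_of_ne h.ne with h1 | h1
      · left; exact ⟨h1, by simp [h1, List.Chain']⟩
      · right; exact ⟨h1, by simp [h1, List.Chain']⟩
    | @cons _ x _ h' r =>
      -- h' : G.Adj w x, r : Walk x v
      have hwv : w ≠ v := by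
        intro e
        subst e
        rw [SimpleGraph.dist_self] at hql
        simp at hql
      have hnadj : ¬ G.Adj u x := by
        intro ha
        have := SimpleGraph.dist_le (Walk.cons ha r)
        simp only [Walk.length_cons] at this hql hlen
        omega
      have hux : u ≠ x := by
        have hmem : x ∈ (Walk.cons h' r).support := by
          simp [Walk.support_cons, Walk.start_mem_support]
        have := (Walk.cons_isPath_iff h (Walk.cons h' r)).mp hp
        intro e
        exact this.2 (e ▸ hmem)
      have step := step_lemma hG h h' hux hnadj
      rcases ih hq hql hwv with ⟨hlt, hc⟩ | ⟨hlt, hc⟩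
      · have hwx : w < x := by
          rw [Walk.support_cons, Walk.support_eq_cons r, List.Chain', List.isChain_cons_cons] at hc
          exact hc.1
        have huw : u < w := by
          rcases lt_or_gt_of_ne h.ne with h1 | h1
          · exact h1
          · exact absurd (step.2 h1) (asymm hwx)
        left
        refine ⟨huw.trans hlt, ?_⟩
        rw [Walk.support_cons, Walk.support_cons, List.Chain', List.isChain_cons_cons]
        rw [Walk.support_cons] at hc
        exact ⟨huw, hc⟩
      · have hwx : x < w := by
          rw [Walk.support_cons, Walk.support_eq_cons r, List.Chain', List.isChain_cons_cons] at hc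
          exact hc.1
        have huw : w < u := by
          rcases lt_or_gt_of_ne h.ne with h1 | h1
          · exact absurd (step.1 h1) (asymm hwx)
          · exact h1
        right
        refine ⟨hlt.trans huw, ?_⟩
        rw [Walk.support_cons, Walk.support_cons, List.Chain', List.isChain_cons_cons]
        rw [Walk.support_cons] at hc
        exact ⟨huw, hc⟩

/-- In a unit interval order, every shortest path from `u` to `v` with `u < v` has
strictly increasing vertices. -/
theorem shortest_path_monotone {V : Type*} [LinearOrder V] (G : SimpleGraph V)
    (hG : IsUnitIntervalOrder G) (u v : V) (huv : u < v)
    (p : G.Walk u v) (hp : p.IsPath) (hlen : p.length = G.dist u v) :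
    p.support.Chain' (· < ·) := by
  rcases aux_mono hG p hp hlen huv.ne with ⟨_, hc⟩ | ⟨hvu, _⟩
  · exact hc
  · exact absurd hvu (asymm huv)
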